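/- Let (f_k)_{k∈ℕ} be a frame sequence in H with synthesis operator T and frame operator S = T T*, and let T† and S† denote the Moore-Penrose pseudoinverses of T and S. Then T† = T* ∘ S†; explicitly, T†f = (⟨f, S†f_k⟩)_k for every f ∈ H, i.e., the pseudoinverse of T is the analysis operator of the dual sequence (S†f_k). -/

import Mathlib

/- Setting: `H` is a complex Hilbert space, `ℓ2` is the Hilbert space of square-summable
complex sequences with standard orthonormal basis `lp.single 2 k 1`. -/

noncomputable section

abbrev ℓ2 : Type := lp (fun _ : ℕ => ℂ) 2

variable {H : Type} [NormedAddCommGroup H] [InnerProductSpace ℂ H] [CompleteSpace H]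

/-- The closed linear span `V` of the set of values of the sequence `f`. -/
def spanClosure (f : ℕ → H) : Submodule ℂ H :=
  (Submodule.span ℂ (Set.range f)).topologicalClosure

instance (f : ℕ → H) : CompleteSpace (spanClosure f) :=
  Submodule.topologicalClosure.completeSpace _

/-- `f` is a frame sequence with frame bounds `A`, `B`:  the frame inequality
`A‖g‖² ≤ ∑ₖ |⟨g, fₖ⟩|² ≤ B‖g‖²` holds for every `g` in the closed linear span `V` of the `fₖ`.
(In Mathlib's convention, the paper's `⟨g, fₖ⟩`, linear in the first argument, is `⟪fₖ, g⟫`.) -/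
def IsFrameSeqWith (f : ℕ → H) (A B : ℝ) : Prop :=
  0 < A ∧ 0 < B ∧
    ∀ g ∈ spanClosure f,
      Summable (fun k => ‖(inner ℂ (f k) g : ℂ)‖ ^ 2) ∧
      A * ‖g‖ ^ 2 ≤ ∑' k, ‖(inner ℂ (f k) g : ℂ)‖ ^ 2 ∧
      (∑' k, ‖(inner ℂ (f k) g : ℂ)‖ ^ 2) ≤ B * ‖g‖ ^ 2

/-- `Ad` is the Moore–Penrose pseudoinverse of the bounded operator `A`:
`A A† A = A`, `A† A A† = A†`, `(A A†)* = A A†` and `(A† A)* = A† A`. -/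
def IsMoorePenrose {E F : Type} [NormedAddCommGroup E] [InnerProductSpace ℂ E] [CompleteSpace E]
    [NormedAddCommGroup F] [InnerProductSpace ℂ F] [CompleteSpace F]
    (A : E →L[ℂ] F) (Ad : F →L[ℂ] E) : Prop :=
  A ∘L Ad ∘L A = A ∧ Ad ∘L A ∘L Ad = Ad ∧
  ContinuousLinearMap.adjoint (A ∘L Ad) = A ∘L Ad ∧
  ContinuousLinearMap.adjoint (Ad ∘L A) = Ad ∘L A

open ContinuousLinearMap

set_option maxHeartbeats 1000000
set_option synthInstance.maxHeartbeats 400000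

/-- Uniqueness of the Moore–Penrose pseudoinverse. -/
lemma mp_unique {E F : Type} [NormedAddCommGroup E] [InnerProductSpace ℂ E] [CompleteSpace E]
    [NormedAddCommGroup F] [InnerProductSpace ℂ F] [CompleteSpace F]
    {A : E →L[ℂ] F} {B C : F →L[ℂ] E}
    (hB : IsMoorePenrose A B) (hC : IsMoorePenrose A C) : B = C := by
  obtain ⟨hB1, hB2, hB3, hB4⟩ := hB
  obtain ⟨hC1, hC2, hC3, hC4⟩ := hC
  have hB1' : (A ∘L B) ∘L A = A := (comp_assoc A B A).trans hB1
  have hC1' : (A ∘L C) ∘L A = A := (comp_assoc A C A).trans hC1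
  have hAC : A ∘L C = A ∘L B := by
    calc A ∘L C = adjoint (A ∘L C) := hC3.symm
      _ = adjoint C ∘L adjoint A := adjoint_comp _ _
      _ = adjoint C ∘L adjoint ((A ∘L B) ∘L A) := by rw [hB1']
      _ = adjoint C ∘L (adjoint A ∘L adjoint (A ∘L B)) := by rw [adjoint_comp (A ∘L B) A]
      _ = adjoint C ∘L (adjoint A ∘L (A ∘L B)) := by rw [hB3]
      _ = (adjoint C ∘L adjoint A) ∘L (A ∘L B) := (comp_assoc _ _ _).symm
      _ = adjoint (A ∘L C) ∘L (A ∘L B) := by rw [adjoint_comp]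
      _ = (A ∘L C) ∘L (A ∘L B) := by rw [hC3]
      _ = ((A ∘L C) ∘L A) ∘L B := (comp_assoc _ _ _).symm
      _ = A ∘L B := by rw [hC1']
  have hCA : C ∘L A = B ∘L A := by
    calc C ∘L A = adjoint (C ∘L A) := hC4.symm
      _ = adjoint A ∘L adjoint C := adjoint_comp _ _
      _ = adjoint (A ∘L (B ∘L A)) ∘L adjoint C := by rw [hB1]
      _ = (adjoint (B ∘L A) ∘L adjoint A) ∘L adjoint C := by rw [adjoint_comp A (B ∘L A)]
      _ = ((B ∘L A) ∘L adjoint A) ∘L adjoint C := by rw [hB4]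
      _ = (B ∘L A) ∘L (adjoint A ∘L adjoint C) := comp_assoc _ _ _
      _ = (B ∘L A) ∘L adjoint (C ∘L A) := by rw [adjoint_comp C A]
      _ = (B ∘L A) ∘L (C ∘L A) := by rw [hC4]
      _ = B ∘L (A ∘L (C ∘L A)) := comp_assoc _ _ _
      _ = B ∘L A := by rw [hC1]
  calc B = B ∘L (A ∘L B) := hB2.symm
    _ = B ∘L (A ∘L C) := by rw [hAC]
    _ = (B ∘L A) ∘L C := (comp_assoc _ _ _).symm
    _ = (C ∘L A) ∘L C := by rw [hCA]
    _ = C ∘L (A ∘L C) := comp_assoc _ _ _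
    _ = C := hC2

/-- for a frame sequence with synthesis operator `T`, frame operator
`S = T T*`, and Moore-Penrose pseudoinverses `T†`, `S†`: `T† = T* ∘ S†`; explicitly,
`T†g = (⟨g, S†fₖ⟩)ₖ`, i.e. `T†` is the analysis operator of the dual sequence `(S†fₖ)`. -/
theorem stmt11 (f : ℕ → H) (A B : ℝ) (hF : IsFrameSeqWith f A B)
    (T : ℓ2 →L[ℂ] H) (hT : ∀ c : ℓ2, HasSum (fun k => c k • f k) (T c))
    (S : H →L[ℂ] H) (hS : S = T ∘L ContinuousLinearMap.adjoint T)
    (Tdag : H →L[ℂ] ℓ2) (hTdag : IsMoorePenrose T Tdag)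
    (Sdag : H →L[ℂ] H) (hSdag : IsMoorePenrose S Sdag) :
    Tdag = ContinuousLinearMap.adjoint T ∘L Sdag ∧
      ∀ (g : H) (k : ℕ), (Tdag g) k = (inner ℂ (Sdag (f k)) g : ℂ) := by
  obtain ⟨hS1, hS2, hS3, hS4⟩ := hSdag
  -- S is self-adjoint
  have hSsa : adjoint S = S := by
    rw [hS, adjoint_comp, adjoint_adjoint]
  -- the adjoint of Sdag is also a Moore-Penrose inverse of S, hence Sdag is self-adjoint
  have hSdsa : adjoint Sdag = Sdag := by
    have h1 : IsMoorePenrose S (adjoint Sdag) := by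
      refine ⟨?_, ?_, ?_, ?_⟩
      · have := congrArg adjoint hS1
        rwa [adjoint_comp, adjoint_comp, hSsa, comp_assoc] at this
      · have := congrArg adjoint hS2
        rwa [adjoint_comp, adjoint_comp, hSsa, comp_assoc] at this
      · have h : S ∘L adjoint Sdag = adjoint (Sdag ∘L S) := by
          rw [adjoint_comp, hSsa]
        rw [h, adjoint_adjoint, hS4]
      · have h : adjoint Sdag ∘L S = adjoint (S ∘L Sdag) := by
          rw [adjoint_comp, hSsa]
        rw [h, adjoint_adjoint, hS3]
    exact (mp_unique ⟨hS1, hS2, hS3, hS4⟩ h1).symm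
  -- key: (S ∘ Sdag) ∘ T = T
  have hPT : (S ∘L Sdag) ∘L T = T := by
    set Q : H →L[ℂ] H := ContinuousLinearMap.id ℂ H - S ∘L Sdag with hQ
    have hQS : Q ∘L S = 0 := by
      rw [hQ, sub_comp, id_comp, comp_assoc, hS1, sub_self]
    have hQsa : adjoint Q = Q := by
      rw [hQ, map_sub, adjoint_id, hS3]
    have hX : (Q ∘L T) ∘L adjoint (Q ∘L T) = 0 := by
      rw [adjoint_comp, hQsa, comp_assoc Q T _, ← comp_assoc T (adjoint T) Q,
        ← hS, ← comp_assoc Q S Q, hQS, zero_comp]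
    have hn := norm_adjoint_comp_self (adjoint (Q ∘L T))
    rw [adjoint_adjoint, hX, norm_zero] at hn
    have h0 : adjoint (Q ∘L T) = 0 := by
      rw [← norm_eq_zero]
      nlinarith [norm_nonneg (adjoint (Q ∘L T))]
    have hz : adjoint (0 : H →L[ℂ] ℓ2) = (0 : ℓ2 →L[ℂ] H) := by
      symm
      rw [eq_adjoint_iff]
      intro x y
      simp
    have hQT : Q ∘L T = 0 := by
      rw [← adjoint_adjoint (Q ∘L T), h0]
      exact hz
    have hsub : T - (S ∘L Sdag) ∘L T = Q ∘L T := by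
      rw [hQ, sub_comp, id_comp]
    exact (sub_eq_zero.mp (hsub.trans hQT)).symm
  -- T* ∘ Sdag is a Moore-Penrose inverse of T
  have hmain : IsMoorePenrose T (adjoint T ∘L Sdag) := by
    refine ⟨?_, ?_, ?_, ?_⟩
    · rw [comp_assoc (adjoint T) Sdag T, ← comp_assoc T (adjoint T) (Sdag ∘L T), ← hS,
        ← comp_assoc S Sdag T, hPT]
    · rw [← comp_assoc T (adjoint T) Sdag, ← hS, comp_assoc (adjoint T) Sdag (S ∘L Sdag), hS2]
    · have h : T ∘L (adjoint T ∘L Sdag) = S ∘L Sdag := by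
        rw [← comp_assoc, ← hS]
      rw [h, hS3]
    · rw [adjoint_comp, adjoint_comp, adjoint_adjoint, hSdsa, comp_assoc]
  have heq : Tdag = adjoint T ∘L Sdag := mp_unique hTdag hmain
  refine ⟨heq, fun g k => ?_⟩
  -- T sends the k-th basis vector to f k
  have hTsingle : T (lp.single 2 k (1 : ℂ)) = f k := by
    have h1 : HasSum (fun j => (lp.single 2 k (1 : ℂ) : ℓ2) j • f j)
        ((lp.single 2 k (1 : ℂ) : ℓ2) k • f k) := by
      apply hasSum_single
      intro j hj
      rw [lp.single_apply_ne 2 k _ hj, zero_smul]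
    rw [lp.single_apply_self, one_smul] at h1
    exact (hT _).unique h1
  have hcoord : (Tdag g) k = (inner ℂ (f k) (Sdag g) : ℂ) := by
    rw [heq]
    have h2 : ((adjoint T ∘L Sdag) g) k = (inner ℂ (lp.single 2 k (1 : ℂ) : ℓ2)
        (adjoint T (Sdag g)) : ℂ) := by
      rw [lp.inner_single_left]
      simp [RCLike.inner_apply]
    rw [h2, adjoint_inner_right, hTsingle]
  have h3 := adjoint_inner_left Sdag g (f k)
  rw [hcoord, ← h3, hSdsa]

end
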